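/- The set of real numbers x such that there exists c > 0 with ‖kx‖ ≥ c/k for all positive integers k (the badly approximable numbers) has Lebesgue measure zero. -/

import Mathlib

open MeasureTheory Filter Metric Topology

set_option maxHeartbeats 1000000

/-- Distance from a real number to the nearest integer. -/
noncomputable def dnint (y : ℝ) : ℝ := ⨅ m : ℤ, |y - m|

lemma dnint_le (y : ℝ) (m : ℤ) : dnint y ≤ |y - m| :=
  ciInf_le ⟨0, by rintro _ ⟨n, rfl⟩; positivity⟩ m

lemma dnint_lip : LipschitzWith 1 dnint := by
  apply LipschitzWith.of_dist_le_mul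
  intro a b
  rw [NNReal.coe_one, one_mul, Real.dist_eq, Real.dist_eq, abs_sub_le_iff]
  constructor
  · rw [sub_le_comm]
    apply le_ciInf; intro m
    have h1 : dnint a ≤ |a - m| := dnint_le a m
    have h2 : |a - m| ≤ |a - b| + |b - m| := by
      have h : a - (m:ℝ) = (a - b) + (b - m) := by ring
      rw [h]; exact abs_add_le _ _
    linarith
  · rw [sub_le_comm]
    apply le_ciInf; intro m
    have h1 : dnint b ≤ |b - m| := dnint_le b m
    have h2 : |b - m| ≤ |a - b| + |a - m| := by
      have h : b - (m:ℝ) = -((a - b)) + (a - m) := by ring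
      rw [h]
      calc |(-(a-b)) + (a - m)| ≤ |(-(a-b))| + |a - m| := abs_add_le _ _
        _ = |a - b| + |a - m| := by rw [abs_neg]
    linarith

def Bset (c : ℝ) : Set ℝ := {y : ℝ | ∀ k : ℕ, 1 ≤ k → dnint (k * y) ≥ c / k}

lemma Bset_meas (c : ℝ) : MeasurableSet (Bset c) := by
  have h : Bset c = ⋂ k : ℕ, {y : ℝ | 1 ≤ k → c / k ≤ dnint (k * y)} := by
    ext y; simp only [Bset, Set.mem_iInter, Set.mem_setOf_eq, ge_iff_le]
  rw [h]
  apply MeasurableSet.iInter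
  intro k
  rcases Nat.eq_zero_or_pos k with hk | hk
  · simp [hk]
  · have h2 : {y : ℝ | 1 ≤ k → c / k ≤ dnint (k * y)} = {y : ℝ | c / k ≤ dnint (k * y)} := by
      ext y; simp only [Set.mem_setOf_eq]
      exact ⟨fun h => h hk, fun h _ => h⟩
    rw [h2]
    exact (isClosed_le continuous_const
      (dnint_lip.continuous.comp (continuous_const.mul continuous_id))).measurableSet

lemma porosity {c : ℝ} (hc0 : 0 < c) (hc1 : c ≤ 1) {x r : ℝ} (hx : x ∈ Bset c)
    (hr0 : 0 < r) (hr1 : r ≤ 1) :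
    volume (Bset c ∩ closedBall x r) ≤ ENNReal.ofReal ((2 - c ^ 2 / 4) * r) := by
  set s : ℝ := Real.sqrt (2 / (c * r)) with hs
  have hcr : 0 < c * r := mul_pos hc0 hr0
  have hcr2 : (1:ℝ) ≤ 2 / (c * r) := by
    rw [le_div_iff₀ hcr]; nlinarith
  have hs1 : 1 ≤ s := by
    rw [hs, show (1:ℝ) = Real.sqrt 1 by simp]
    exact Real.sqrt_le_sqrt hcr2
  have hs0 : (0:ℝ) ≤ s := by linarith
  have hssq : s ^ 2 = 2 / (c * r) := Real.sq_sqrt (by positivity)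
  set Q : ℕ := ⌈s⌉₊ with hQ
  have hQ1 : 1 ≤ Q := by rw [hQ]; exact Nat.one_le_ceil_iff.mpr (by linarith)
  have hQs : s ≤ (Q : ℝ) := Nat.le_ceil s
  have hQub : (Q : ℝ) ≤ 2 * s := by
    have := Nat.ceil_lt_add_one hs0
    rw [hQ]; push_cast at this ⊢; linarith
  obtain ⟨j, k, hk0, hkQ, hjk⟩ := Real.exists_int_int_abs_mul_sub_le x hQ1
  set q : ℕ := k.toNat with hq
  have hq1 : 1 ≤ q := by omega
  have hqk : (q : ℝ) = (k : ℝ) := by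
    rw [hq]; exact_mod_cast congrArg Int.cast (Int.toNat_of_nonneg hk0.le)
  have hq0 : (0:ℝ) < q := by exact_mod_cast hq1
  have hqQ : (q : ℝ) ≤ Q := by rw [hqk]; exact_mod_cast hkQ
  have hQ0 : (0:ℝ) < (Q:ℝ) + 1 := by positivity
  have hxq : c / q ≤ dnint (q * x) := hx q hq1
  have hdle : dnint ((q:ℝ) * x) ≤ |(q:ℝ) * x - j| := dnint_le _ j
  have hjq : |(q:ℝ) * x - j| ≤ 1 / ((Q:ℝ) + 1) := by
    rw [hqk]; exact_mod_cast hjk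
  have hcq : c / q ≤ 1 / ((Q:ℝ) + 1) := le_trans hxq (le_trans hdle hjq)
  have hqlb : c * ((Q:ℝ) + 1) ≤ q := by
    rw [div_le_div_iff₀ hq0 hQ0] at hcq; linarith
  -- distance from x to the rational center
  have hxjeq : x - (j:ℝ) / q = ((q:ℝ) * x - j) / q := by
    field_simp
  have hxj : |x - (j:ℝ) / q| ≤ 1 / ((q:ℝ) * ((Q:ℝ) + 1)) := by
    rw [hxjeq, abs_div, abs_of_pos hq0]
    rw [div_le_div_iff₀ hq0 (by positivity)]
    calc |(q:ℝ) * x - j| * ((q:ℝ) * ((Q:ℝ)+1))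
        ≤ (1/((Q:ℝ)+1)) * ((q:ℝ) * ((Q:ℝ)+1)) := by
          apply mul_le_mul_of_nonneg_right hjq (by positivity)
      _ = 1 * q := by field_simp
  -- the removed interval
  set J : Set ℝ := ball ((j:ℝ) / q) (c / q ^ 2) with hJ
  have hcq2 : c / q ^ 2 ≤ 1 / ((q:ℝ) * ((Q:ℝ) + 1)) := by
    rw [div_le_div_iff₀ (by positivity) (by positivity)]
    have h1 : c * ((Q:ℝ)+1) ≤ q := hqlb
    calc c * ((q:ℝ) * ((Q:ℝ)+1)) = (c * ((Q:ℝ)+1)) * q := by ring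
      _ ≤ (q:ℝ) * q := by apply mul_le_mul_of_nonneg_right h1 hq0.le
      _ = 1 * q ^ 2 := by ring
  have hJsub : J ⊆ closedBall x r := by
    intro y hy
    rw [hJ, mem_ball, Real.dist_eq] at hy
    rw [mem_closedBall, Real.dist_eq]
    have h1 : |y - x| ≤ |y - (j:ℝ)/q| + |(j:ℝ)/q - x| := by
      have h : y - x = (y - (j:ℝ)/q) + ((j:ℝ)/q - x) := by ring
      rw [h]; exact abs_add_le _ _
    have h2 : |(j:ℝ)/q - x| = |x - (j:ℝ)/q| := abs_sub_comm _ _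
    have h3 : |y - x| ≤ 2 / ((q:ℝ) * ((Q:ℝ)+1)) := by
      rw [h2] at h1
      calc |y - x| ≤ |y - (j:ℝ)/q| + |x - (j:ℝ)/q| := h1
        _ ≤ c / q^2 + 1/((q:ℝ)*((Q:ℝ)+1)) := by
            apply add_le_add hy.le hxj
        _ ≤ 1/((q:ℝ)*((Q:ℝ)+1)) + 1/((q:ℝ)*((Q:ℝ)+1)) := by linarith [hcq2]
        _ = 2 / ((q:ℝ)*((Q:ℝ)+1)) := by ring
    have h4 : 2 / ((q:ℝ) * ((Q:ℝ)+1)) ≤ r := by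
      have h5 : c * ((Q:ℝ)+1) * ((Q:ℝ)+1) ≤ (q:ℝ) * ((Q:ℝ)+1) :=
        mul_le_mul_of_nonneg_right hqlb hQ0.le
      have hB : s ≤ (Q:ℝ)+1 := by linarith
      have hss' : s * s ≤ ((Q:ℝ)+1) * ((Q:ℝ)+1) := mul_le_mul hB hB hs0 (by linarith)
      have h6 : c * (s * s) ≤ c * (((Q:ℝ)+1) * ((Q:ℝ)+1)) :=
        mul_le_mul_of_nonneg_left hss' hc0.le
      have h7 : c * (s * s) = 2 / r := by
        have hss : s * s = 2 / (c * r) := by rw [← hssq]; ring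
        rw [hss]
        rw [show c * (2 / (c * r)) = 2 * c / (r * c) by ring,
          mul_div_mul_right 2 r hc0.ne']
      have h8 : 2 / r ≤ (q:ℝ) * ((Q:ℝ)+1) := by nlinarith
      have h9 : 2 ≤ r * ((q:ℝ) * ((Q:ℝ)+1)) := by
        rw [div_le_iff₀ hr0] at h8; linarith
      rw [div_le_iff₀ (by positivity)]; linarith
    linarith
  have hJdisj : Disjoint (Bset c) J := by
    rw [Set.disjoint_right]
    intro y hy hyB
    rw [hJ, mem_ball, Real.dist_eq] at hy
    have h1 : dnint ((q:ℝ) * y) ≤ |(q:ℝ) * y - j| := dnint_le _ j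
    have h2 : |(q:ℝ) * y - j| = (q:ℝ) * |y - (j:ℝ)/q| := by
      have h : (q:ℝ) * y - j = (q:ℝ) * (y - (j:ℝ)/q) := by field_simp
      rw [h, abs_mul, abs_of_pos hq0]
    have h3 : (q:ℝ) * |y - (j:ℝ)/q| < (q:ℝ) * (c / q^2) := by
      apply mul_lt_mul_of_pos_left hy hq0
    have h4 : (q:ℝ) * (c / q^2) = c / q := by field_simp
    have h5 : dnint ((q:ℝ) * y) < c / q := by
      rw [h4] at h3; rw [h2] at h1; linarith
    exact absurd (hyB q hq1) (not_le.mpr h5)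
  -- measure estimate
  have hJvol : volume J = ENNReal.ofReal (2 * (c / q ^ 2)) := by
    rw [hJ, Real.volume_ball]
  have hJlb : ENNReal.ofReal (c ^ 2 * r / 4) ≤ volume J := by
    rw [hJvol]
    apply ENNReal.ofReal_le_ofReal
    have hqs : (q:ℝ) ≤ 2 * s := le_trans hqQ hQub
    have hq2 : (q:ℝ)^2 ≤ 4 * s^2 := by
      rw [pow_two, show 4 * s^2 = (2*s) * (2*s) by ring]
      exact mul_self_le_mul_self hq0.le hqs
    have h8 : (q:ℝ)^2 ≤ 8 / (c * r) := by
      rw [hssq] at hq2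
      have he : 4 * (2 / (c * r)) = 8 / (c * r) := by ring
      linarith
    rw [le_div_iff₀ hcr] at h8
    have h9 : c * ((q:ℝ)^2 * (c * r)) ≤ c * 8 := mul_le_mul_of_nonneg_left h8 hc0.le
    have h10 : 2 * (c / (q:ℝ)^2) = 2 * c / (q:ℝ)^2 := by ring
    rw [h10, div_le_div_iff₀ (by norm_num : (0:ℝ) < 4) (by positivity : (0:ℝ) < (q:ℝ)^2)]
    nlinarith
  have hsubset : Bset c ∩ closedBall x r ⊆ closedBall x r \ J := by
    intro y hy
    exact ⟨hy.2, fun hJy => Set.disjoint_left.mp hJdisj hy.1 hJy⟩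
  calc volume (Bset c ∩ closedBall x r) ≤ volume (closedBall x r \ J) := measure_mono hsubset
    _ = volume (closedBall x r) - volume J := by
        rw [measure_diff hJsub measurableSet_ball.nullMeasurableSet (by rw [hJvol]; exact ENNReal.ofReal_ne_top)]
    _ ≤ volume (closedBall x r) - ENNReal.ofReal (c ^ 2 * r / 4) := by
        exact tsub_le_tsub_left hJlb _
    _ = ENNReal.ofReal (2 * r) - ENNReal.ofReal (c ^ 2 * r / 4) := by
        rw [Real.volume_closedBall]
    _ = ENNReal.ofReal (2 * r - c ^ 2 * r / 4) := by
        rw [ENNReal.ofReal_sub _ (by positivity)]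
    _ = ENNReal.ofReal ((2 - c ^ 2 / 4) * r) := by congr 1; ring

lemma Bset_null {c : ℝ} (hc0 : 0 < c) (hc1 : c ≤ 1) : volume (Bset c) = 0 := by
  by_contra hne
  have hres : volume.restrict (Bset c) ≠ 0 :=
    fun h => hne (Measure.restrict_eq_zero.mp h)
  have : (ae (volume.restrict (Bset c))).NeBot := ae_neBot.mpr hres
  obtain ⟨x, hxB, hxT⟩ :=
    ((ae_restrict_mem (Bset_meas c)).and
      (Besicovitch.ae_tendsto_measure_inter_div volume (Bset c))).exists
  set a : ENNReal := ENNReal.ofReal (1 - c ^ 2 / 8) with ha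
  have ha1 : a < 1 := by
    rw [ha]
    calc ENNReal.ofReal (1 - c^2/8) < ENNReal.ofReal 1 := by
          apply ENNReal.ofReal_lt_ofReal_iff (by norm_num) |>.mpr; nlinarith
      _ = 1 := ENNReal.ofReal_one
  have hev1 : ∀ᶠ r in 𝓝[>] (0:ℝ),
      volume (Bset c ∩ closedBall x r) / volume (closedBall x r) > a :=
    hxT.eventually (eventually_gt_nhds ha1)
  have hev2 : ∀ᶠ r in 𝓝[>] (0:ℝ),
      volume (Bset c ∩ closedBall x r) / volume (closedBall x r) ≤ a := by
    filter_upwards [Ioo_mem_nhdsGT_of_mem (Set.mem_Ico.mpr ⟨le_refl (0:ℝ), zero_lt_one⟩)]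
    intro r hr
    have hr0 : 0 < r := hr.1
    have hr1 : r ≤ 1 := hr.2.le
    have hvol : volume (closedBall x r) = ENNReal.ofReal (2 * r) := Real.volume_closedBall x r
    have hne0 : volume (closedBall x r) ≠ 0 := by
      rw [hvol]; simp [ENNReal.ofReal_eq_zero]; linarith
    have hnetop : volume (closedBall x r) ≠ ⊤ := by rw [hvol]; exact ENNReal.ofReal_ne_top
    rw [ENNReal.div_le_iff hne0 hnetop]
    calc volume (Bset c ∩ closedBall x r) ≤ ENNReal.ofReal ((2 - c^2/4) * r) :=
          porosity hc0 hc1 hxB hr0 hr1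
      _ = a * volume (closedBall x r) := by
          rw [hvol, ha, ← ENNReal.ofReal_mul (by nlinarith)]
          congr 1; ring
  obtain ⟨r, h1, h2⟩ := (hev1.and hev2).exists
  exact absurd h2 (not_le.mpr h1)

theorem stmt_16 :
    MeasureTheory.volume
      {x : ℝ | ∃ c > (0:ℝ), ∀ k : ℕ, 1 ≤ k → dnint (k * x) ≥ c / k} = 0 := by
  have hsub : {x : ℝ | ∃ c > (0:ℝ), ∀ k : ℕ, 1 ≤ k → dnint (k * x) ≥ c / k} ⊆
      ⋃ n : ℕ, Bset (1 / (n + 1)) := by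
    intro x ⟨c, hc0, hx⟩
    obtain ⟨n, hn⟩ := exists_nat_one_div_lt hc0
    refine Set.mem_iUnion.mpr ⟨n, ?_⟩
    intro k hk
    have hk0 : (0:ℝ) < k := by exact_mod_cast hk
    calc (1 / ((n:ℝ) + 1)) / k ≤ c / k := by gcongr
      _ ≤ dnint (k * x) := hx k hk
  refine measure_mono_null hsub (measure_iUnion_null fun n => ?_)
  apply Bset_null
  · positivity
  · rw [div_le_one (by positivity)]
    have h := Nat.cast_nonneg (α := ℝ) n
    linarith
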